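/- The set of ST-valid inferences is not equal to the relational composition of the sets of K3-valid and LP-valid inferences: 𝕊𝕋⁺ ≠ 𝕂₃⁺ ∘ 𝕃ℙ⁺. In particular, the inference p ∨ ¬p ⇒ p ∧ ¬p belongs to 𝕂₃⁺ ∘ 𝕃ℙ⁺ (with middle set {p, ¬p}) but is not ST-valid. -/
import Mathlib


/-- Propositional formulas over a countably infinite set of variables,
with constants ⊤, ⊥, λ and connectives ¬, ∨, ∧. -/
inductive Fm : Type
  | var : ℕ → Fm
  | top : Fm
  | bot : Fm
  | lam : Fm
  | neg : Fm → Fm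
  | disj : Fm → Fm → Fm
  | conj : Fm → Fm → Fm
  deriving DecidableEq

/-- A function `v : Var → ℚ` is an SK-valuation if it takes values in {0, 1/2, 1}. -/
def SK (v : ℕ → ℚ) : Prop := ∀ p : ℕ, v p = 0 ∨ v p = 1/2 ∨ v p = 1

/-- Extension of a valuation to all formulas by the Strong Kleene scheme. -/
def eval (v : ℕ → ℚ) : Fm → ℚ
  | .var p => v p
  | .top => 1
  | .bot => 0
  | .lam => 1/2
  | .neg φ => 1 - eval v φ
  | .disj φ ψ => max (eval v φ) (eval v ψ)
  | .conj φ ψ => min (eval v φ) (eval v ψ)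

/-- An inference is a pair of finite sets of formulas. -/
abbrev Inference := Finset Fm × Finset Fm

def K3Valid (Γ Δ : Finset Fm) : Prop :=
  ∀ v : ℕ → ℚ, SK v → (∀ γ ∈ Γ, eval v γ = 1) → ∃ δ ∈ Δ, eval v δ = 1

def LPValid (Γ Δ : Finset Fm) : Prop :=
  ∀ v : ℕ → ℚ, SK v → (∀ γ ∈ Γ, eval v γ ≠ 0) → ∃ δ ∈ Δ, eval v δ ≠ 0

def STValid (Γ Δ : Finset Fm) : Prop :=
  ∀ v : ℕ → ℚ, SK v → (∀ γ ∈ Γ, eval v γ = 1) → ∃ δ ∈ Δ, eval v δ ≠ 0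

def TSValid (Γ Δ : Finset Fm) : Prop :=
  ∀ v : ℕ → ℚ, SK v → (∀ γ ∈ Γ, eval v γ ≠ 0) → ∃ δ ∈ Δ, eval v δ = 1

def K3plus : Set Inference := {I | K3Valid I.1 I.2}
def LPplus : Set Inference := {I | LPValid I.1 I.2}
def STplus : Set Inference := {I | STValid I.1 I.2}
def TSplus : Set Inference := {I | TSValid I.1 I.2}

/-- Relative product: the middle term is a single formula. -/
def RelProd (R S : Set Inference) : Set Inference :=
  {I | ∃ φ : Fm, (I.1, ({φ} : Finset Fm)) ∈ R ∧ (({φ} : Finset Fm), I.2) ∈ S}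

/-- Relative sum: for every single formula, one of the two components holds. -/
def RelSum (R S : Set Inference) : Set Inference :=
  {I | ∀ φ : Fm, (I.1, ({φ} : Finset Fm)) ∈ R ∨ (({φ} : Finset Fm), I.2) ∈ S}

/-- Relational composition: the middle term is a finite set of formulas. -/
def RelComp (R S : Set Inference) : Set Inference :=
  {I | ∃ Θ : Finset Fm, (I.1, Θ) ∈ R ∧ (Θ, I.2) ∈ S}

theorem ST_ne_relComp :
    STplus ≠ RelComp K3plus LPplus ∧
    (({Fm.disj (.var 0) (.neg (.var 0))} : Finset Fm),
     ({Fm.conj (.var 0) (.neg (.var 0))} : Finset Fm)) ∈ RelComp K3plus LPplus ∧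
    ¬ STValid ({Fm.disj (.var 0) (.neg (.var 0))} : Finset Fm)
        ({Fm.conj (.var 0) (.neg (.var 0))} : Finset Fm) := by

  have hmem : (({Fm.disj (.var 0) (.neg (.var 0))} : Finset Fm),
      ({Fm.conj (.var 0) (.neg (.var 0))} : Finset Fm)) ∈ RelComp K3plus LPplus := by
    refine ⟨{Fm.var 0, Fm.neg (.var 0)}, ?_, ?_⟩
    · intro v hv h
      have h1 := h (Fm.disj (.var 0) (.neg (.var 0))) (Finset.mem_singleton_self _)
      simp only [eval] at h1
      rcases hv 0 with h0 | h0 | h0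
      · exact ⟨Fm.neg (.var 0), by simp, by simp [eval, h0]⟩
      · rw [h0] at h1; norm_num at h1
      · exact ⟨Fm.var 0, by simp, by simp [eval, h0]⟩
    · intro v hv h
      have h1 := h (Fm.var 0) (by simp)
      have h2 := h (Fm.neg (.var 0)) (by simp)
      refine ⟨Fm.conj (.var 0) (.neg (.var 0)), Finset.mem_singleton_self _, ?_⟩
      simp only [eval] at h1 h2 ⊢
      rcases hv 0 with h0 | h0 | h0 <;> rw [h0] at h1 h2 ⊢ <;> norm_num at *
  have hnst : ¬ STValid ({Fm.disj (.var 0) (.neg (.var 0))} : Finset Fm)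
      ({Fm.conj (.var 0) (.neg (.var 0))} : Finset Fm) := by
    intro h
    obtain ⟨δ, hδ, hne⟩ := h (fun _ => 1) (fun p => Or.inr (Or.inr rfl))
      (by intro γ hγ; simp at hγ; subst hγ; simp [eval])
    simp at hδ; subst hδ
    simp [eval] at hne
  refine ⟨?_, hmem, hnst⟩
  intro heq
  exact hnst (heq ▸ hmem : _ ∈ STplus)
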